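/- (Lemma C.1: resilience applied to random inputs.) Let n, f be natural numbers with 1 ≤ n − f, let λ > 0 and ρ ≥ 0, and let A : (Fin n → E) → E be a measurable map satisfying the (f, λ)-resilience inequality. Let S ⊆ Fin n with |S| = n − f, and let x₁, …, xₙ : Ω → E be random vectors with finite second moments such that 𝔼[‖xᵢ − xᵢ'‖²] ≤ ρ² for all i, i' ∈ S. Then 𝔼[ ‖A(x₁, …, xₙ) − x̄_S‖² ] ≤ 4·λ²·((n − f − 1)²/(n − f))·ρ², where x̄_S(ω) = (1/(n−f)) Σ_{i∈S} xᵢ(ω). -/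

import Mathlib

open MeasureTheory Finset

lemma pair_sum_eq {E : Type*} [NormedAddCommGroup E] [InnerProductSpace ℝ E]
    {ι : Type*} (S : Finset ι) (y : ι → E) :
    ∑ p ∈ S ×ˢ S, ‖y p.1 - y p.2‖ ^ 2
      = 2 * S.card * ∑ i ∈ S, ‖y i‖ ^ 2 - 2 * ‖∑ i ∈ S, y i‖ ^ 2 := by
  have h : ∀ a b : E, ‖a - b‖ ^ 2 = ‖a‖ ^ 2 - 2 * inner ℝ a b + ‖b‖ ^ 2 := norm_sub_sq_real
  rw [Finset.sum_product]
  simp only [h]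
  rw [← real_inner_self_eq_norm_sq (∑ i ∈ S, y i), sum_inner]
  simp only [Finset.sum_add_distrib, Finset.sum_sub_distrib, Finset.sum_const,
    ← Finset.mul_sum, ← Finset.sum_mul, nsmul_eq_mul, ← inner_sum]
  ring

lemma mean_sum_eq {E : Type*} [NormedAddCommGroup E] [InnerProductSpace ℝ E]
    {ι : Type*} {S : Finset ι} (hS : S.Nonempty) (y : ι → E) :
    ∑ i ∈ S, ‖y i - (S.card : ℝ)⁻¹ • ∑ j ∈ S, y j‖ ^ 2
      = ∑ i ∈ S, ‖y i‖ ^ 2 - (S.card : ℝ)⁻¹ * ‖∑ j ∈ S, y j‖ ^ 2 := by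
  have hm : (0:ℝ) < S.card := by exact_mod_cast Finset.card_pos.2 hS
  have h : ∀ a b : E, ‖a - b‖ ^ 2 = ‖a‖ ^ 2 - 2 * inner ℝ a b + ‖b‖ ^ 2 := norm_sub_sq_real
  simp only [h]
  rw [Finset.sum_add_distrib, Finset.sum_sub_distrib, Finset.sum_const, nsmul_eq_mul,
    ← Finset.mul_sum, ← sum_inner, real_inner_smul_right, real_inner_self_eq_norm_sq, norm_smul,
    mul_pow]
  have : ‖(S.card : ℝ)⁻¹‖ ^ 2 = (S.card:ℝ)⁻¹ * (S.card:ℝ)⁻¹ := by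
    rw [Real.norm_eq_abs, abs_of_nonneg (by positivity), sq]
  rw [this]
  field_simp
  ring

lemma sup_sq_le_pair_sum {E : Type*} [NormedAddCommGroup E] [InnerProductSpace ℝ E]
    {ι : Type*} {S : Finset ι} (hS : S.Nonempty) (y : ι → E) :
    ((S ×ˢ S).sup' (hS.product hS) (fun p => ‖y p.1 - y p.2‖)) ^ 2
      ≤ (2 / (S.card : ℝ)) * ∑ p ∈ S ×ˢ S, ‖y p.1 - y p.2‖ ^ 2 := by
  have hm : (0:ℝ) < S.card := by exact_mod_cast Finset.card_pos.2 hS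
  set c : E := (S.card : ℝ)⁻¹ • ∑ j ∈ S, y j with hc
  set T : ℝ := ∑ i ∈ S, ‖y i - c‖ ^ 2 with hT
  have hTsum : ∑ p ∈ S ×ˢ S, ‖y p.1 - y p.2‖ ^ 2 = 2 * (S.card : ℝ) * T := by
    rw [pair_sum_eq, hT, hc, mean_sum_eq hS]
    field_simp
  obtain ⟨p, hp, hpe⟩ := Finset.exists_mem_eq_sup' (hS.product hS)
      (fun p => ‖y p.1 - y p.2‖)
  obtain ⟨ha, hb⟩ := Finset.mem_product.1 hp
  have htri : ‖y p.1 - y p.2‖ ≤ ‖y p.1 - c‖ + ‖y p.2 - c‖ := by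
    have := norm_sub_le (y p.1 - c) (y p.2 - c)
    simpa [sub_sub_sub_cancel_right] using this
  have h1 : ‖y p.1 - c‖ ^ 2 ≤ T :=
    Finset.single_le_sum (f := fun i => ‖y i - c‖ ^ 2) (fun i _ => sq_nonneg _) ha
  have h2 : ‖y p.2 - c‖ ^ 2 ≤ T :=
    Finset.single_le_sum (f := fun i => ‖y i - c‖ ^ 2) (fun i _ => sq_nonneg _) hb
  have hfinal : ‖y p.1 - y p.2‖ ^ 2 ≤ 4 * T := by
    have hsq := mul_self_le_mul_self (norm_nonneg (y p.1 - y p.2)) htri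
    nlinarith [hsq, sq_nonneg (‖y p.1 - c‖ - ‖y p.2 - c‖)]
  rw [hpe, hTsum]
  have : (2 / (S.card : ℝ)) * (2 * (S.card : ℝ) * T) = 4 * T := by field_simp; ring
  rw [this]
  exact hfinal

/-- Lemma C.1: an `(f, λ)`-resilient aggregation rule applied to random inputs whose
pairwise second moments are bounded by `ρ²` deviates from the honest average by at most
`4·λ²·((n−f−1)²/(n−f))·ρ²` in second moment. -/
theorem resilient_agr_random_inputs
    {E : Type*} [NormedAddCommGroup E] [InnerProductSpace ℝ E] [CompleteSpace E]
    [MeasurableSpace E] [BorelSpace E]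
    {Ω : Type*} [MeasurableSpace Ω] (P : Measure Ω) [IsProbabilityMeasure P]
    (n f : ℕ) (hnf : 1 ≤ n - f) (lam ρ : ℝ) (hlam : 0 < lam) (hρ : 0 ≤ ρ)
    (A : (Fin n → E) → E) (hAmeas : Measurable A)
    (hres : ∀ (y : Fin n → E) (S : Finset (Fin n)), S.card = n - f →
      ∀ hS : S.Nonempty,
      ‖A y - (((n - f : ℕ) : ℝ))⁻¹ • ∑ i ∈ S, y i‖ ≤
        lam * (S ×ˢ S).sup' (hS.product hS) (fun p => ‖y p.1 - y p.2‖))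
    (S : Finset (Fin n)) (hS : S.card = n - f)
    (x : Fin n → Ω → E) (hx : ∀ i : Fin n, MemLp (x i) 2 P)
    (hpair : ∀ i ∈ S, ∀ i' ∈ S, ∫ ω, ‖x i ω - x i' ω‖ ^ 2 ∂P ≤ ρ ^ 2) :
    ∫ ω, ‖A (fun i => x i ω) - (((n - f : ℕ) : ℝ))⁻¹ • ∑ i ∈ S, x i ω‖ ^ 2 ∂P ≤
      4 * lam ^ 2 * ((((n - f : ℕ) : ℝ) - 1) ^ 2 / ((n - f : ℕ) : ℝ)) * ρ ^ 2 := by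
  have hSne : S.Nonempty := Finset.card_pos.1 (by rw [hS]; exact hnf)
  set mR : ℝ := ((n - f : ℕ) : ℝ) with hmR
  have hm1 : (1:ℝ) ≤ mR := by rw [hmR]; exact_mod_cast hnf
  have hm0 : (0:ℝ) < mR := lt_of_lt_of_le one_pos hm1
  -- the dominating function
  set h : Ω → ℝ := fun ω => (lam ^ 2 * (2 / mR)) * ∑ p ∈ S ×ˢ S, ‖x p.1 ω - x p.2 ω‖ ^ 2
    with hh
  have hint : Integrable h P := by
    apply Integrable.const_mul
    apply integrable_finset_sum
    intro p _
    exact (((hx p.1).sub (hx p.2)).norm).integrable_sq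
  have hle : ∀ ω, ‖A (fun i => x i ω) - mR⁻¹ • ∑ i ∈ S, x i ω‖ ^ 2 ≤ h ω := by
    intro ω
    have h1 := hres (fun i => x i ω) S hS hSne
    have h2 : ‖A (fun i => x i ω) - mR⁻¹ • ∑ i ∈ S, x i ω‖ ^ 2
        ≤ lam ^ 2 * ((S ×ˢ S).sup' (hSne.product hSne)
            (fun p => ‖x p.1 ω - x p.2 ω‖)) ^ 2 := by
      rw [← mul_pow]
      exact pow_le_pow_left₀ (norm_nonneg _) h1 2
    have h3 := sup_sq_le_pair_sum hSne (fun i => x i ω)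
    rw [hS] at h3
    calc ‖A (fun i => x i ω) - mR⁻¹ • ∑ i ∈ S, x i ω‖ ^ 2
        ≤ lam ^ 2 * ((S ×ˢ S).sup' (hSne.product hSne)
            (fun p => ‖x p.1 ω - x p.2 ω‖)) ^ 2 := h2
      _ ≤ lam ^ 2 * ((2 / mR) * ∑ p ∈ S ×ˢ S, ‖x p.1 ω - x p.2 ω‖ ^ 2) :=
          mul_le_mul_of_nonneg_left h3 (sq_nonneg lam)
      _ = h ω := by rw [hh]; ring
  have hstep1 : ∫ ω, ‖A (fun i => x i ω) - mR⁻¹ • ∑ i ∈ S, x i ω‖ ^ 2 ∂P ≤ ∫ ω, h ω ∂P :=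
    integral_mono_of_nonneg (Filter.Eventually.of_forall fun ω => sq_nonneg _) hint
      (Filter.Eventually.of_forall hle)
  have hstep2 : ∫ ω, h ω ∂P
      = (lam ^ 2 * (2 / mR)) * ∑ p ∈ S ×ˢ S, ∫ ω, ‖x p.1 ω - x p.2 ω‖ ^ 2 ∂P := by
    rw [hh]
    rw [integral_const_mul, integral_finset_sum]
    intro p _
    exact (((hx p.1).sub (hx p.2)).norm).integrable_sq
  have hstep3 : ∑ p ∈ S ×ˢ S, ∫ ω, ‖x p.1 ω - x p.2 ω‖ ^ 2 ∂P
      ≤ (mR * mR - mR) * ρ ^ 2 := by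
    have hb : ∑ p ∈ S ×ˢ S, ∫ ω, ‖x p.1 ω - x p.2 ω‖ ^ 2 ∂P
        ≤ ∑ p ∈ S ×ˢ S, (if p.1 = p.2 then 0 else ρ ^ 2) := by
      apply Finset.sum_le_sum
      intro p hp
      obtain ⟨ha, hb⟩ := Finset.mem_product.1 hp
      by_cases hd : p.1 = p.2
      · simp [hd]
      · simp only [if_neg hd]
        exact hpair p.1 ha p.2 hb
    refine hb.trans ?_
    rw [Finset.sum_ite, Finset.sum_const_zero, Finset.sum_const, zero_add, nsmul_eq_mul]
    have hcard : ((S ×ˢ S).filter fun p => ¬ p.1 = p.2) = S.offDiag := by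
      ext p
      simp [Finset.mem_offDiag, Finset.mem_product, and_assoc]
    rw [hcard, Finset.offDiag_card, hS]
    have hcast : (((n - f) * (n - f) - (n - f) : ℕ) : ℝ) = mR * mR - mR := by
      rw [Nat.cast_sub (Nat.le_mul_of_pos_left _ (lt_of_lt_of_le one_pos hnf))]
      push_cast [hmR]
      ring
    rw [hcast, mul_comm]
  have hρ2 : (0:ℝ) ≤ ρ ^ 2 := sq_nonneg ρ
  have hfinal : (lam ^ 2 * (2 / mR)) * ((mR * mR - mR) * ρ ^ 2)
      ≤ 4 * lam ^ 2 * ((mR - 1) ^ 2 / mR) * ρ ^ 2 := by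
    have hkey : (mR - 1) * (mR - 2) ≥ 0 := by
      rcases Nat.lt_or_ge (n - f) 2 with hlt | hge
      · have : n - f = 1 := le_antisymm (Nat.lt_succ_iff.1 hlt) hnf
        rw [hmR, this]; norm_num
      · have : (2:ℝ) ≤ mR := by rw [hmR]; exact_mod_cast hge
        nlinarith
    have h2m : (lam ^ 2 * (2 / mR)) * ((mR * mR - mR) * ρ ^ 2)
        = lam ^ 2 * ρ ^ 2 * (2 * mR * (mR - 1)) / mR := by ring
    have h4 : 4 * lam ^ 2 * ((mR - 1) ^ 2 / mR) * ρ ^ 2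
        = lam ^ 2 * ρ ^ 2 * (4 * (mR - 1) ^ 2) / mR := by ring
    rw [h2m, h4, div_le_div_iff₀ hm0 hm0]
    nlinarith [mul_nonneg (mul_nonneg (sq_nonneg lam) hρ2) hkey, hm0]
  calc ∫ ω, ‖A (fun i => x i ω) - mR⁻¹ • ∑ i ∈ S, x i ω‖ ^ 2 ∂P
      ≤ ∫ ω, h ω ∂P := hstep1
    _ = (lam ^ 2 * (2 / mR)) * ∑ p ∈ S ×ˢ S, ∫ ω, ‖x p.1 ω - x p.2 ω‖ ^ 2 ∂P := hstep2
    _ ≤ (lam ^ 2 * (2 / mR)) * ((mR * mR - mR) * ρ ^ 2) :=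
        mul_le_mul_of_nonneg_left hstep3 (by positivity)
    _ ≤ 4 * lam ^ 2 * ((mR - 1) ^ 2 / mR) * ρ ^ 2 := hfinal
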